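/- arXiv:1805.07859 — 2 statements merged into one kernel-verified Lean document; each statement's English description precedes it below -/
import Mathlib

section
/- Derivatives and warped wave equation of f/ρ̄ (Proposition 3.7). Fix ε ∈ ℝ and an integer n ≥ 1. For (u,v) ∈ ℝ² set f := −uv and ρ̄ := (v − u) − 2εuv, and on the open set {ρ̄ ≠ 0} let h := f/ρ̄. Then at every point of {ρ̄ ≠ 0}: ∂_u h = −v²/ρ̄² and ∂_v h = u²/ρ̄²; and with the radial ε-warped wave operator □̄ one has □̄h = ((n−1)/(2ρ̄))·(1 − 2εf/ρ̄) − (n−3)·f/ρ̄³. -/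
noncomputable section

/-- Partial derivative in the first null coordinate `u`. -/
def pu (h : ℝ → ℝ → ℝ) (u v : ℝ) : ℝ := deriv (fun s => h s v) u

/-- Partial derivative in the second null coordinate `v`. -/
def pv (h : ℝ → ℝ → ℝ) (u v : ℝ) : ℝ := deriv (fun s => h u s) v

/-- The `ε`-warped radius `ρ̄ = (v − u) − 2εuv`. -/
def rhoBar (ε u v : ℝ) : ℝ := (v - u) - 2 * ε * u * v

/-- The radial `ε`-warped wave operator
`□̄h = −∂_u∂_v h − ((n−1)/(2ρ̄))·((1 − 2εu)∂_u h − (1 + 2εv)∂_v h)`. -/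
def warpedBox (ε : ℝ) (n : ℕ) (h : ℝ → ℝ → ℝ) (u v : ℝ) : ℝ :=
  -(pu (fun a b => pv h a b) u v) -
    ((n : ℝ) - 1) / (2 * rhoBar ε u v) *
      ((1 - 2 * ε * u) * pu h u v - (1 + 2 * ε * v) * pv h u v)

lemma hasDerivAt_rho_u (ε u v : ℝ) :
    HasDerivAt (fun s => rhoBar ε s v) (-(1 + 2 * ε * v)) u := by
  have h1 : HasDerivAt (fun s : ℝ => 2 * ε * s * v) (2 * ε * 1 * v) u :=
    ((hasDerivAt_id u).const_mul (2 * ε)).mul_const v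
  have h2 : HasDerivAt (fun s : ℝ => (v - s) - 2 * ε * s * v)
      ((0 - 1) - 2 * ε * 1 * v) u :=
    ((hasDerivAt_const u v).sub (hasDerivAt_id u)).sub h1
  have : HasDerivAt (fun s => rhoBar ε s v) ((0 - 1) - 2 * ε * 1 * v) u := by
    simpa [rhoBar] using h2
  convert this using 1; ring

lemma hasDerivAt_rho_v (ε u v : ℝ) :
    HasDerivAt (fun s => rhoBar ε u s) (1 - 2 * ε * u) v := by
  have h1 : HasDerivAt (fun s : ℝ => 2 * ε * u * s) (2 * ε * u * 1) v :=
    (hasDerivAt_id v).const_mul (2 * ε * u)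
  have h2 : HasDerivAt (fun s : ℝ => (s - u) - 2 * ε * u * s)
      ((1 - 0) - 2 * ε * u * 1) v :=
    ((hasDerivAt_id v).sub (hasDerivAt_const v u)).sub h1
  have : HasDerivAt (fun s => rhoBar ε u s) ((1 - 0) - 2 * ε * u * 1) v := by
    simpa [rhoBar] using h2
  convert this using 1; ring

lemma hasDerivAt_h_u (ε u v : ℝ) (hρ : rhoBar ε u v ≠ 0) :
    HasDerivAt (fun s => -(s * v) / rhoBar ε s v) (-(v ^ 2) / (rhoBar ε u v) ^ 2) u := by
  have hnum : HasDerivAt (fun s : ℝ => -(s * v)) (-(1 * v)) u :=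
    ((hasDerivAt_id u).mul_const v).neg
  have := hnum.fun_div (hasDerivAt_rho_u ε u v) hρ
  refine this.congr_deriv ?_
  rw [div_eq_div_iff (pow_ne_zero 2 hρ) (pow_ne_zero 2 hρ)]; simp only [rhoBar]
  ring

lemma hasDerivAt_h_v (ε u v : ℝ) (hρ : rhoBar ε u v ≠ 0) :
    HasDerivAt (fun s => -(u * s) / rhoBar ε u s) (u ^ 2 / (rhoBar ε u v) ^ 2) v := by
  have hnum : HasDerivAt (fun s : ℝ => -(u * s)) (-(u * 1)) v :=
    ((hasDerivAt_id v).const_mul u).neg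
  have := hnum.fun_div (hasDerivAt_rho_v ε u v) hρ
  refine this.congr_deriv ?_
  rw [div_eq_div_iff (pow_ne_zero 2 hρ) (pow_ne_zero 2 hρ)]; simp only [rhoBar]
  ring

lemma pv_h (ε u v : ℝ) (hρ : rhoBar ε u v ≠ 0) :
    pv (fun a b => -(a * b) / rhoBar ε a b) u v = u ^ 2 / (rhoBar ε u v) ^ 2 :=
  (hasDerivAt_h_v ε u v hρ).deriv

lemma pu_h (ε u v : ℝ) (hρ : rhoBar ε u v ≠ 0) :
    pu (fun a b => -(a * b) / rhoBar ε a b) u v = -(v ^ 2) / (rhoBar ε u v) ^ 2 :=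
  (hasDerivAt_h_u ε u v hρ).deriv

lemma pu_pv_h (ε u v : ℝ) (hρ : rhoBar ε u v ≠ 0) :
    pu (fun a b => pv (fun a b => -(a * b) / rhoBar ε a b) a b) u v =
      (2 * u * (rhoBar ε u v) ^ 2 -
        u ^ 2 * (2 * rhoBar ε u v * (-(1 + 2 * ε * v)))) / ((rhoBar ε u v) ^ 2) ^ 2 := by
  have hcont : ContinuousAt (fun s => rhoBar ε s v) u := by
    unfold rhoBar; fun_prop
  have hev : ∀ᶠ s in nhds u, rhoBar ε s v ≠ 0 := hcont.eventually_ne hρ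
  have heq : (fun s => pv (fun a b => -(a * b) / rhoBar ε a b) s v) =ᶠ[nhds u]
      (fun s => s ^ 2 / (rhoBar ε s v) ^ 2) := by
    filter_upwards [hev] with s hs
    exact pv_h ε s v hs
  have hd : HasDerivAt (fun s => s ^ 2 / (rhoBar ε s v) ^ 2)
      ((2 * u * (rhoBar ε u v) ^ 2 -
        u ^ 2 * (2 * rhoBar ε u v * (-(1 + 2 * ε * v)))) / ((rhoBar ε u v) ^ 2) ^ 2) u := by
    have hnum : HasDerivAt (fun s : ℝ => s ^ 2) (2 * u) u := by
      simpa using hasDerivAt_pow 2 u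
    have hden : HasDerivAt (fun s => (rhoBar ε s v) ^ 2)
        (2 * rhoBar ε u v * (-(1 + 2 * ε * v))) u := by
      have := (hasDerivAt_rho_u ε u v).fun_pow 2
      simpa [mul_comm, mul_assoc, mul_left_comm] using this
    have hden0 : (rhoBar ε u v) ^ 2 ≠ 0 := pow_ne_zero 2 hρ
    exact hnum.div hden hden0
  have := hd.deriv
  calc pu (fun a b => pv (fun a b => -(a * b) / rhoBar ε a b) a b) u v
      = deriv (fun s => s ^ 2 / (rhoBar ε s v) ^ 2) u := heq.deriv_eq
    _ = _ := this

/-- **Proposition 3.7 (derivatives and warped wave equation of `f/ρ̄`).** -/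
theorem f_over_rho_derivatives (ε : ℝ) (n : ℕ) (hn : 1 ≤ n) (u v : ℝ)
    (hρ : rhoBar ε u v ≠ 0) :
    pu (fun a b => -(a * b) / rhoBar ε a b) u v = -(v ^ 2) / (rhoBar ε u v) ^ 2 ∧
    pv (fun a b => -(a * b) / rhoBar ε a b) u v = u ^ 2 / (rhoBar ε u v) ^ 2 ∧
    warpedBox ε n (fun a b => -(a * b) / rhoBar ε a b) u v =
      ((n : ℝ) - 1) / (2 * rhoBar ε u v) * (1 - 2 * ε * (-(u * v)) / rhoBar ε u v) -
        ((n : ℝ) - 3) * (-(u * v)) / (rhoBar ε u v) ^ 3 := by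
  refine ⟨pu_h ε u v hρ, pv_h ε u v hρ, ?_⟩
  rw [warpedBox, pu_h ε u v hρ, pv_h ε u v hρ, pu_pv_h ε u v hρ]
  have hρ' : rhoBar ε u v = (v - u) - 2 * ε * u * v := rfl
  field_simp
  ring_nf
  rw [hρ']
  ring
end
end

section
/- Conformal identities for the warping map (Proposition 3.12). Fix ε ∈ ℝ and (u,v) ∈ ℝ² with 1 + εu ≠ 0 and 1 − εv ≠ 0, and set ξ := (1 + εu)(1 − εv), ū := u/(1 + εu), v̄ := v/(1 − εv). Then: (i) −ū·v̄ = ξ^{−1}·(−uv) (the hyperbolic function transforms as f ∘ Φ̄ = ξ^{−1}·f); (ii) (v̄ − ū) − 2ε·ū·v̄ = ξ^{−1}·(v − u) (the warped radius transforms as ρ̄ ∘ Φ̄ = ξ^{−1}·r); (iii) the derivative of u ↦ u/(1 + εu) at u equals (1 + εu)^{−2}, the derivative of v ↦ v/(1 − εv) at v equals (1 − εv)^{−2}, and hence their product equals ξ^{−2}; together with (ii) squared, ((v̄ − ū) − 2ε·ū·v̄)² = ξ^{−2}·(v − u)², these identities express that the map Φ̄(u,v,ω) := (ū, v̄, ω)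 pulls the warped metric ḡ = −4 dū dv̄ + ρ̄² γ̊ back to ξ^{−2}·(−4 du dv + r² γ̊) = ξ^{−2}·g, i.e. Φ̄ is a conformal isometry with conformal factor ξ^{−2}. -/
noncomputable section

/-- **Proposition 3.12 (conformal identities for the warping map `Φ̄`).**
With `ξ := (1+εu)(1−εv)`, `ū := u/(1+εu)`, `v̄ := v/(1−εv)`:
(i) `f ∘ Φ̄ = ξ⁻¹ f`; (ii) `ρ̄ ∘ Φ̄ = ξ⁻¹ r`; (iii) the null-coordinate derivatives of the
map are `(1+εu)⁻²` and `(1−εv)⁻²`, with product `ξ⁻²`, and `(ρ̄ ∘ Φ̄)² = ξ⁻² r²`,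
expressing that `Φ̄` pulls `ḡ` back to `ξ⁻² g`. -/
theorem warping_map_conformal_identities (ε u v : ℝ)
    (h1 : 1 + ε * u ≠ 0) (h2 : 1 - ε * v ≠ 0) :
    -- (i) the hyperbolic function transforms conformally
    (-(u / (1 + ε * u) * (v / (1 - ε * v))) =
      ((1 + ε * u) * (1 - ε * v))⁻¹ * (-(u * v))) ∧
    -- (ii) the warped radius transforms conformally
    ((v / (1 - ε * v) - u / (1 + ε * u)) -
        2 * ε * (u / (1 + ε * u)) * (v / (1 - ε * v)) =
      ((1 + ε * u) * (1 - ε * v))⁻¹ * (v - u)) ∧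
    -- (iii) derivatives of the null-coordinate reparametrizations
    deriv (fun s => s / (1 + ε * s)) u = ((1 + ε * u) ^ 2)⁻¹ ∧
    deriv (fun s => s / (1 - ε * s)) v = ((1 - ε * v) ^ 2)⁻¹ ∧
    deriv (fun s => s / (1 + ε * s)) u * deriv (fun s => s / (1 - ε * s)) v =
      (((1 + ε * u) * (1 - ε * v)) ^ 2)⁻¹ ∧
    ((v / (1 - ε * v) - u / (1 + ε * u)) -
        2 * ε * (u / (1 + ε * u)) * (v / (1 - ε * v))) ^ 2 =
      (((1 + ε * u) * (1 - ε * v)) ^ 2)⁻¹ * (v - u) ^ 2 := by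
  have hd1 : deriv (fun s => s / (1 + ε * s)) u = ((1 + ε * u) ^ 2)⁻¹ := by
    have h : HasDerivAt (fun s : ℝ => s / (1 + ε * s))
        ((1 * (1 + ε * u) - u * ε) / (1 + ε * u) ^ 2) u := by
      have ha : HasDerivAt (fun s : ℝ => 1 + ε * s) ε u := by
        simpa using ((hasDerivAt_id u).const_mul ε).const_add 1
      exact (hasDerivAt_id u).div ha h1
    rw [h.deriv]
    field_simp
    ring
  have hd2 : deriv (fun s => s / (1 - ε * s)) v = ((1 - ε * v) ^ 2)⁻¹ := by
    have h : HasDerivAt (fun s : ℝ => s / (1 - ε * s))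
        ((1 * (1 - ε * v) - v * (-ε)) / (1 - ε * v) ^ 2) v := by
      have ha : HasDerivAt (fun s : ℝ => 1 - ε * s) (-ε) v := by
        simpa only [mul_one] using ((hasDerivAt_id' v).const_mul ε).const_sub 1
      exact ((hasDerivAt_id v).div ha h2 : _)
    rw [h.deriv]
    field_simp
    ring
  have h2' : ((v / (1 - ε * v) - u / (1 + ε * u)) -
        2 * ε * (u / (1 + ε * u)) * (v / (1 - ε * v)) =
      ((1 + ε * u) * (1 - ε * v))⁻¹ * (v - u)) := by
    rw [div_sub_div _ _ h2 h1, eq_inv_mul_iff_mul_eq₀ (mul_ne_zero h1 h2)]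
    field_simp
    ring
  refine ⟨by field_simp, h2', hd1, hd2, ?_, ?_⟩
  · rw [hd1, hd2, ← mul_inv, mul_pow]
  · rw [h2', mul_pow, inv_pow]
end
end
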